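/- Let n ≥ 1 and let C = {x ∈ ℝⁿ : ⟨x, u_i⟩ ≥ 0 for i = 1, …, N} be a rational polyhedral convex cone, where u_1, …, u_N ∈ ℤⁿ. Let R ∈ ℤⁿ be an integer point lying in the topological interior of C. Then there exists a positive integer m such that for every integer point ξ ∈ ℤⁿ lying in the topological interior of C, the point m·ξ − R belongs to C. -/

import Mathlib

open RealInnerProductSpace

/-- If `x` is in the interior of a set where `⟪·, v⟫ ≥ 0`, and `v ≠ 0`, then `⟪x, v⟫ > 0`. -/
lemma stmt_17_aux {E : Type*} [NormedAddCommGroup E] [InnerProductSpace ℝ E]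
    {S : Set E} {x : E} (hx : x ∈ interior S) {v : E} (hv : v ≠ 0)
    (hS : ∀ y ∈ S, 0 ≤ ⟪y, v⟫) : 0 < ⟪x, v⟫ := by
  rw [mem_interior_iff_mem_nhds, Metric.mem_nhds_iff] at hx
  obtain ⟨ε, hε, hball⟩ := hx
  have hvn : 0 < ‖v‖ := norm_pos_iff.mpr hv
  set c : ℝ := ε / (2 * ‖v‖) with hc
  have hcpos : 0 < c := by positivity
  have hy : x - c • v ∈ S := by
    apply hball
    simp only [Metric.mem_ball, dist_eq_norm]
    have h1 : x - c • v - x = -(c • v) := by abel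
    rw [h1, norm_neg, norm_smul, Real.norm_eq_abs, abs_of_pos hcpos, hc]
    have h2 : ε / (2 * ‖v‖) * ‖v‖ = ε / 2 := by field_simp
    rw [h2]; linarith
  have h0 := hS _ hy
  rw [inner_sub_left, real_inner_smul_left, real_inner_self_eq_norm_sq] at h0
  have : 0 < c * ‖v‖ ^ 2 := by positivity
  linarith

theorem stmt_17 (n : ℕ) (hn : 1 ≤ n) (N : ℕ) (u : Fin N → Fin n → ℤ)
    (R : Fin n → ℤ)
    (hR : (WithLp.toLp 2 (fun i => (R i : ℝ)) : EuclideanSpace ℝ (Fin n)) ∈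
      interior {x : EuclideanSpace ℝ (Fin n) |
        ∀ i : Fin N, 0 ≤ ⟪x, (WithLp.toLp 2 (fun j => (u i j : ℝ)) : EuclideanSpace ℝ (Fin n))⟫}) :
    ∃ m : ℕ, 0 < m ∧
      ∀ ξ : Fin n → ℤ,
        (WithLp.toLp 2 (fun i => (ξ i : ℝ)) : EuclideanSpace ℝ (Fin n)) ∈
          interior {x : EuclideanSpace ℝ (Fin n) |
            ∀ i : Fin N, 0 ≤ ⟪x, (WithLp.toLp 2 (fun j => (u i j : ℝ)) : EuclideanSpace ℝ (Fin n))⟫} →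
        (m : ℝ) • (WithLp.toLp 2 (fun i => (ξ i : ℝ)) : EuclideanSpace ℝ (Fin n)) -
            (WithLp.toLp 2 (fun i => (R i : ℝ)) : EuclideanSpace ℝ (Fin n)) ∈
          {x : EuclideanSpace ℝ (Fin n) |
            ∀ i : Fin N, 0 ≤ ⟪x, (WithLp.toLp 2 (fun j => (u i j : ℝ)) : EuclideanSpace ℝ (Fin n))⟫} := by
  classical
  set A : Fin N → ℤ := fun i => ∑ j, R j * u i j with hA
  refine ⟨1 + Finset.univ.sup (fun i => (A i).toNat),
    Nat.succ_le_iff.mp (Nat.le_add_right 1 _), ?_⟩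
  intro ξ hξ i
  set m : ℕ := 1 + Finset.univ.sup (fun i => (A i).toNat) with hm
  have hinner : ∀ (z : Fin n → ℤ) (k : Fin N),
      (inner (𝕜 := ℝ) (E := EuclideanSpace ℝ (Fin n))
        (WithLp.toLp 2 (fun j => (z j : ℝ))) (WithLp.toLp 2 (fun j => (u k j : ℝ))))
        = ((∑ j, z j * u k j : ℤ) : ℝ) := by
    intro z k
    rw [PiLp.inner_apply]
    push_cast
    simp [mul_comm]
  show (0:ℝ) ≤ _
  rw [inner_sub_left, real_inner_smul_left, hinner ξ i, hinner R i]
  by_cases hv : (WithLp.toLp 2 (fun j => (u i j : ℝ)) : EuclideanSpace ℝ (Fin n)) = 0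
  · have h1 : ((∑ j, ξ j * u i j : ℤ) : ℝ) = 0 := by
      rw [← hinner ξ i, hv, inner_zero_right]
    have h2 : ((∑ j, R j * u i j : ℤ) : ℝ) = 0 := by
      rw [← hinner R i, hv, inner_zero_right]
    rw [h1, h2]; norm_num
  · have hpos : (0:ℝ) < inner (𝕜 := ℝ) (E := EuclideanSpace ℝ (Fin n))
        (WithLp.toLp 2 (fun j => (ξ j : ℝ))) (WithLp.toLp 2 (fun j => (u i j : ℝ))) :=
      stmt_17_aux (E := EuclideanSpace ℝ (Fin n)) hξ hv (fun y hy => hy i)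
    rw [hinner ξ i] at hpos
    have hB1 : (1:ℤ) ≤ ∑ j, ξ j * u i j := by exact_mod_cast hpos
    have hAm : (A i : ℤ) ≤ (m : ℤ) := by
      calc A i ≤ ((A i).toNat : ℤ) := Int.self_le_toNat _
        _ ≤ (m : ℤ) := by
          have : (A i).toNat ≤ m := by
            rw [hm]
            exact le_trans (Finset.le_sup (f := fun k => (A k).toNat) (Finset.mem_univ i)) (Nat.le_add_left _ 1)
          exact_mod_cast this
    have key : (∑ j, R j * u i j : ℤ) ≤ (m : ℤ) * ∑ j, ξ j * u i j := by
      calc (∑ j, R j * u i j : ℤ) = A i := by rw [hA]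
        _ ≤ (m : ℤ) := hAm
        _ = (m : ℤ) * 1 := (mul_one _).symm
        _ ≤ (m : ℤ) * ∑ j, ξ j * u i j :=
            mul_le_mul_of_nonneg_left hB1 (by positivity)
    have : ((∑ j, R j * u i j : ℤ) : ℝ) ≤ (m : ℝ) * ((∑ j, ξ j * u i j : ℤ) : ℝ) := by
      exact_mod_cast key
    linarith
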